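/- Let p be a prime, S a finite p-group, and F a fusion system on S satisfying Axiom I_S (Aut_S(S) is a Sylow p-subgroup of Aut_F(S)) and Axiom II (every φ ∈ Hom_F(P,S) such that φ(P) is fully F-centralized extends to a morphism in Hom_F(N_φ,S)). Let P ≤ S be a fully F-centralized subgroup such that |N_S(P)| ≥ |N_S(Q)| for every fully F-centralized subgroup Q that is F-conjugate to P. Then Aut_S(P) is a Sylow p-subgroup of Aut_F(P). -/

import Mathlib

/-! ## Collections of morphisms between subgroups -/

section Collections

variable {S : Type*} [Group S]

/-- The conjugation homomorphism `P →* S`, `u ↦ s * u * s⁻¹`. -/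
def conjHom (s : S) (P : Subgroup S) : P →* S :=
  (MulAut.conj s).toMonoidHom.comp P.subtype

/-- A "collection" of morphism sets on the poset of subgroups of `S`:
for each pair of subgroups `P Q ≤ S` a set of group homomorphisms `P →* S`
(to be thought of as morphisms from `P` to `Q`, i.e. maps landing in `Q`). -/
abbrev Collection (S : Type*) [Group S] :=
  ∀ (P : Subgroup S), Subgroup S → Set (P →* S)

namespace Collection

/-- `P` and `Q` are conjugate in the collection `C` if some morphism of `C`
restricts to an isomorphism from `P` onto `Q`. -/
def IsConj (C : Collection S) (P Q : Subgroup S) : Prop :=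
  ∃ φ ∈ C P Q, MonoidHom.range φ = Q

/-- `P` is fully centralized: its centralizer has maximal order in its conjugacy class. -/
def FullyCentralized (C : Collection S) (P : Subgroup S) : Prop :=
  ∀ Q : Subgroup S, C.IsConj P Q →
    Nat.card (Subgroup.centralizer (Q : Set S)) ≤ Nat.card (Subgroup.centralizer (P : Set S))

/-- `P` is fully normalized: its normalizer has maximal order in its conjugacy class. -/
def FullyNormalized (C : Collection S) (P : Subgroup S) : Prop :=
  ∀ Q : Subgroup S, C.IsConj P Q → Nat.card (Subgroup.normalizer (Q : Set S)) ≤ Nat.card (Subgroup.normalizer (P : Set S))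

end Collection

/-- The set `Aut_S(P)` of automorphisms of `P` induced by conjugation by elements of the
normalizer `N_S(P)`, as a set of homomorphisms `P →* S`. -/
def autSSet (P : Subgroup S) : Set (P →* S) :=
  {φ | ∃ s ∈ Subgroup.normalizer (P : Set S), φ = conjHom s P}

/-- `Aut_S(P)` is a Sylow `p`-subgroup of `Aut_C(P) = C P P`:  `Aut_S(P)` is contained
in `Aut_C(P)`, has `p`-power order, and has index prime to `p` in `Aut_C(P)`. -/
def Collection.AutSIsSylow (p : ℕ) (C : Collection S) (P : Subgroup S) : Prop :=
  autSSet P ⊆ C P P ∧ (∃ n : ℕ, Nat.card (autSSet P) = p ^ n) ∧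
    ∃ k : ℕ, ¬ p ∣ k ∧ Nat.card (C P P) = k * Nat.card (autSSet P)

/-- A collection is level-wise closed if it contains all conjugation maps induced by `S`,
the inverse of every isomorphism it contains, and all composites of composable
isomorphisms it contains. -/
def LevelwiseClosed (C : Collection S) : Prop :=
  (∀ (P Q : Subgroup S) (s : S), (∀ u ∈ P, s * u * s⁻¹ ∈ Q) → conjHom s P ∈ C P Q) ∧
  (∀ (P Q : Subgroup S), ∀ φ ∈ C P Q, MonoidHom.range φ = Q → ∀ ψ : Q →* S,
    (∀ (u : P) (hq : (φ u : S) ∈ Q), ψ ⟨φ u, hq⟩ = u) → ψ ∈ C Q P) ∧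
  (∀ (P Q R : Subgroup S) (φ : P →* S), φ ∈ C P Q → ∀ ψ : Q →* S, ψ ∈ C Q R →
    ∀ hφ : MonoidHom.range φ = Q, MonoidHom.range ψ = R →
    ψ.comp (φ.codRestrict Q (fun u => hφ ▸ show φ u ∈ φ.range from ⟨u, rfl⟩)) ∈ C P R)

end Collections

/-! ## Fusion systems -/

section Fusion

variable {S : Type*} [Group S]

/-- A fusion system on a group `S`: for each pair of subgroups `P, Q ≤ S`, a set
`Hom P Q` of injective homomorphisms `P → Q` (represented as homomorphisms `P →* S`
with image contained in `Q`), containing all conjugation maps induced by `S`, closed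
under composition, and such that every morphism restricts to an isomorphism onto its
image lying in the fusion system, whose inverse also lies in the fusion system. -/
structure FusionSystem (S : Type*) [Group S] where
  Hom : Collection S
  injective' : ∀ {P Q : Subgroup S} {φ : P →* S}, φ ∈ Hom P Q → Function.Injective φ
  mapsTo' : ∀ {P Q : Subgroup S} {φ : P →* S}, φ ∈ Hom P Q → ∀ u : P, φ u ∈ Q
  conj_mem' : ∀ (P Q : Subgroup S) (s : S), (∀ u ∈ P, s * u * s⁻¹ ∈ Q) →
    conjHom s P ∈ Hom P Q
  comp_mem' : ∀ {P Q R : Subgroup S} {φ : P →* S} {ψ : Q →* S},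
    (hφ : φ ∈ Hom P Q) → (hψ : ψ ∈ Hom Q R) →
    ψ.comp (φ.codRestrict Q (mapsTo' hφ)) ∈ Hom P R
  target_mem' : ∀ {P Q : Subgroup S} {φ : P →* S}, φ ∈ Hom P Q → φ ∈ Hom P φ.range
  inv_mem' : ∀ {P Q : Subgroup S} {φ : P →* S}, φ ∈ Hom P Q →
    ∃ ψ ∈ Hom φ.range P, ∀ u : P, ψ ⟨φ u, ⟨u, rfl⟩⟩ = u

/-- The subgroup `N_φ = {x ∈ N_S(P) | ∃ y ∈ N_S(φ(P)), ∀ u ∈ P, φ(xux⁻¹) = yφ(u)y⁻¹}`. -/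
def Nphi (P : Subgroup S) (φ : P →* S) : Subgroup S where
  carrier := {x | x ∈ Subgroup.normalizer (P : Set S) ∧ ∃ y ∈ Subgroup.normalizer (φ.range : Set S),
    ∀ (u v : S) (hu : u ∈ P) (hv : v ∈ P), v = x * u * x⁻¹ →
      φ ⟨v, hv⟩ = y * φ ⟨u, hu⟩ * y⁻¹}
  one_mem' := by
    refine ⟨(Subgroup.normalizer (P : Set S)).one_mem, 1, (Subgroup.normalizer (φ.range : Set S)).one_mem, ?_⟩
    intro u v hu hv hveq
    have h1 : (⟨v, hv⟩ : P) = ⟨u, hu⟩ := Subtype.ext (show v = u by rw [hveq]; group)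
    rw [h1]; group
  mul_mem' := by
    rintro x₁ x₂ ⟨hx₁, y₁, hy₁, h₁⟩ ⟨hx₂, y₂, hy₂, h₂⟩
    refine ⟨mul_mem hx₁ hx₂, y₁ * y₂, mul_mem hy₁ hy₂, ?_⟩
    intro u v hu hv hveq
    have hw : x₂ * u * x₂⁻¹ ∈ P := (Subgroup.mem_normalizer_iff.mp hx₂ u).mp hu
    have e1 : φ ⟨v, hv⟩ = y₁ * φ ⟨x₂ * u * x₂⁻¹, hw⟩ * y₁⁻¹ :=
      h₁ _ _ hw hv (by rw [hveq]; group)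
    have e2 : φ ⟨x₂ * u * x₂⁻¹, hw⟩ = y₂ * φ ⟨u, hu⟩ * y₂⁻¹ := h₂ _ _ hu hw rfl
    rw [e1, e2]; group
  inv_mem' := by
    rintro x ⟨hx, y, hy, h⟩
    refine ⟨Subgroup.inv_mem _ hx, y⁻¹, Subgroup.inv_mem _ hy, ?_⟩
    intro u v hu hv hveq
    have e1 : φ ⟨u, hu⟩ = y * φ ⟨v, hv⟩ * y⁻¹ :=
      h _ _ hv hu (by rw [hveq]; group)
    rw [e1]; group

namespace FusionSystem

/-- Axiom I of saturation: every fully normalized subgroup is fully centralized and its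
`S`-automorphism group is a Sylow `p`-subgroup of its full automorphism group. -/
def AxiomI (p : ℕ) (F : FusionSystem S) : Prop :=
  ∀ P : Subgroup S, F.Hom.FullyNormalized P →
    F.Hom.FullyCentralized P ∧ F.Hom.AutSIsSylow p P

/-- Axiom I restricted to the full subgroup `S` itself:
`Aut_S(S)` is a Sylow `p`-subgroup of `Aut_F(S)`. -/
def AxiomIS (p : ℕ) (F : FusionSystem S) : Prop :=
  F.Hom.AutSIsSylow p ⊤

/-- Axiom II of saturation (the extension axiom): every morphism `φ : P → S` of `F`
whose image is fully centralized extends to a morphism of `F` defined on `N_φ`. -/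
def AxiomII (F : FusionSystem S) : Prop :=
  ∀ (P : Subgroup S) (φ : P →* S), φ ∈ F.Hom P ⊤ →
    F.Hom.FullyCentralized φ.range →
    ∃ φbar ∈ F.Hom (Nphi P φ) ⊤,
      ∀ (u : S) (hu : u ∈ P) (hu' : u ∈ Nphi P φ), φbar ⟨u, hu'⟩ = φ ⟨u, hu⟩

/-- A fusion system is saturated if it satisfies Axioms I and II. -/
def Saturated (p : ℕ) (F : FusionSystem S) : Prop :=
  F.AxiomI p ∧ F.AxiomII

end FusionSystem

/-- The closure of a collection: the smallest fusion system containing it.  (The morphism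
sets of the closure are the intersections of the morphism sets over all fusion systems
containing the collection.) -/
def closureHom (C : Collection S) : Collection S :=
  fun P Q =>
    {φ | ∀ F : FusionSystem S, (∀ P' Q', C P' Q' ⊆ F.Hom P' Q') → φ ∈ F.Hom P Q}

/-- A level-wise closed collection `C` is saturated at `P ≤ S` if:
(I_P) every fully normalized `Q` conjugate to `P` in `C` is fully centralized and
`Aut_S(Q)` is a Sylow `p`-subgroup of `Aut_C(Q)`; and
(II_P) every `φ ∈ Hom_C(P,S)` with fully centralized image extends to a morphism
`N_φ → S` in the closure of `C`. -/
def SaturatedAt (p : ℕ) (C : Collection S) (P : Subgroup S) : Prop :=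
  (∀ Q : Subgroup S, C.IsConj P Q → C.FullyNormalized Q →
    C.FullyCentralized Q ∧ C.AutSIsSylow p Q) ∧
  (∀ φ ∈ C P ⊤, C.FullyCentralized (MonoidHom.range φ) →
    ∃ φbar ∈ closureHom C (Nphi P φ) ⊤,
      ∀ (u : S) (hu : u ∈ P) (hu' : u ∈ Nphi P φ), φbar ⟨u, hu'⟩ = φ ⟨u, hu⟩)

end Fusion

section AuxBasic

variable {S : Type*} [Group S]

theorem conjHom_apply (s : S) (P : Subgroup S) (u : P) :
    conjHom s P u = s * u * s⁻¹ := rfl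

theorem FusionSystem.mem_of_eq (F : FusionSystem S) {P Q : Subgroup S} {φ ψ : P →* S}
    (h : φ ∈ F.Hom P Q) (e : φ = ψ) : ψ ∈ F.Hom P Q := e ▸ h

theorem conjMemNormalizer {Q : Subgroup S} {x : S} (hx : x ∈ (Subgroup.normalizer (Q : Set S))) :
    ∀ u ∈ Q, x * u * x⁻¹ ∈ Q := fun u hu =>
  (Subgroup.mem_normalizer_iff.mp hx u).mp hu

theorem FusionSystem.incl_mem (F : FusionSystem S) {P Q : Subgroup S} (h : P ≤ Q) :
    conjHom 1 P ∈ F.Hom P Q :=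
  F.conj_mem' P Q 1 (fun u hu => by simpa using h hu)

theorem FusionSystem.restr_mem (F : FusionSystem S) {P Q R : Subgroup S} (h : P ≤ Q)
    {φ : Q →* S} (hφ : φ ∈ F.Hom Q R) :
    φ.comp (Subgroup.inclusion h) ∈ F.Hom P R := by
  refine F.mem_of_eq (F.comp_mem' (F.incl_mem h) hφ) ?_
  ext u
  simp only [MonoidHom.comp_apply]
  congr 1
  ext
  simp [conjHom_apply]

theorem centralizer_le_normalizer' (Q : Subgroup S) :
    Subgroup.centralizer (Q : Set S) ≤ (Subgroup.normalizer (Q : Set S)) := by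
  intro x hx
  rw [Subgroup.mem_normalizer_iff]
  intro h
  constructor
  · intro hh
    have := (Subgroup.mem_centralizer_iff.mp hx h hh).symm
    have : x * h * x⁻¹ = h := by rw [this]; group
    rwa [this]
  · intro hh
    have h2 := Subgroup.mem_centralizer_iff.mp hx _ hh
    have h3 : x * h = x * (x * h * x⁻¹) := by rw [← h2]; group
    have h4 : h = x * h * x⁻¹ := mul_left_cancel h3
    rwa [h4]

end AuxBasic
section AuxFinite

variable {S : Type*} [Group S] [Finite S]

theorem subgroup_eq_of_le_of_card_le {H K : Subgroup S} (h : H ≤ K)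
    (hc : Nat.card K ≤ Nat.card H) : H = K := by
  have hfin : (K : Set S).Finite := Set.toFinite _
  have := Set.eq_of_subset_of_ncard_le (show (H : Set S) ⊆ K from h)
    (by rw [← Nat.card_coe_set_eq, ← Nat.card_coe_set_eq]; exact hc) hfin
  exact SetLike.ext' this

theorem card_range_of_injective {P : Subgroup S} {φ : P →* S}
    (h : Function.Injective φ) : Nat.card φ.range = Nat.card P :=
  (Nat.card_congr (MonoidHom.ofInjective h).toEquiv).symm

theorem FusionSystem.range_le (F : FusionSystem S) {P Q : Subgroup S} {φ : P →* S}
    (hφ : φ ∈ F.Hom P Q) : φ.range ≤ Q := by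
  rintro x ⟨u, rfl⟩
  exact F.mapsTo' hφ u

theorem FusionSystem.range_eq_of_card (F : FusionSystem S) {P Q : Subgroup S} {φ : P →* S}
    (hφ : φ ∈ F.Hom P Q) (hc : Nat.card Q ≤ Nat.card P) : φ.range = Q :=
  subgroup_eq_of_le_of_card_le (F.range_le hφ)
    (by rwa [card_range_of_injective (F.injective' hφ)])

theorem FusionSystem.isConj_refl (F : FusionSystem S) (P : Subgroup S) :
    F.Hom.IsConj P P := by
  refine ⟨conjHom 1 P, F.incl_mem le_rfl, ?_⟩
  have : conjHom 1 P = P.subtype := by ext u; simp [conjHom_apply]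
  rw [this, Subgroup.range_subtype]

theorem FusionSystem.card_eq_of_isConj (F : FusionSystem S) {P Q : Subgroup S}
    (h : F.Hom.IsConj P Q) : Nat.card P = Nat.card Q := by
  obtain ⟨φ, hφ, hr⟩ := h
  rw [← hr, card_range_of_injective (F.injective' hφ)]

/-- An inverse morphism with full data. -/
theorem FusionSystem.inv_hom_of_mem (F : FusionSystem S) {P Q : Subgroup S} {φ : P →* S}
    (hφ : φ ∈ F.Hom P Q) (hr : φ.range = Q) :
    ∃ ι : Q →* S, ι ∈ F.Hom Q P ∧ ι.range = P ∧
      ∀ (u : P) (hq : (φ u : S) ∈ Q), ι ⟨φ u, hq⟩ = u := by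
  subst hr
  obtain ⟨ψ, hψ, hinv⟩ := F.inv_mem' hφ
  refine ⟨ψ, hψ, ?_, fun u hq => hinv u⟩
  refine le_antisymm (F.range_le hψ) ?_
  intro v hv
  exact ⟨⟨φ ⟨v, hv⟩, ⟨⟨v, hv⟩, rfl⟩⟩, by rw [hinv ⟨v, hv⟩]⟩

theorem FusionSystem.isConj_symm (F : FusionSystem S) {P Q : Subgroup S}
    (h : F.Hom.IsConj P Q) : F.Hom.IsConj Q P := by
  obtain ⟨φ, hφ, hr⟩ := h
  obtain ⟨ι, hι, hιr, _⟩ := F.inv_hom_of_mem hφ hr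
  exact ⟨ι, hι, hιr⟩

theorem FusionSystem.isConj_trans (F : FusionSystem S) {P Q R : Subgroup S}
    (h1 : F.Hom.IsConj P Q) (h2 : F.Hom.IsConj Q R) : F.Hom.IsConj P R := by
  obtain ⟨φ, hφ, hrφ⟩ := h1
  obtain ⟨ψ, hψ, hrψ⟩ := h2
  have c1 : Nat.card P = Nat.card Q := by
    rw [← hrφ]; exact (card_range_of_injective (F.injective' hφ)).symm
  have c2 : Nat.card Q = Nat.card R := by
    rw [← hrψ]; exact (card_range_of_injective (F.injective' hψ)).symm
  have hmem := F.comp_mem' hφ hψ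
  exact ⟨_, hmem, F.range_eq_of_card hmem (le_of_eq (c2.symm.trans c1.symm))⟩

/-- Build a `MulEquiv` from an `F`-isomorphism. -/
theorem FusionSystem.exists_mulEquiv (F : FusionSystem S) {P Q : Subgroup S} {φ : P →* S}
    (hφ : φ ∈ F.Hom P Q) (hr : φ.range = Q) :
    ∃ e : P ≃* Q, ∀ u : P, (e u : S) = φ u := by
  subst hr
  exact ⟨MonoidHom.ofInjective (F.injective' hφ),
    fun u => by rw [MonoidHom.ofInjective_apply]⟩

end AuxFinite
section AutGroups

variable {S : Type*} [Group S]

/-- The underlying homomorphism `P →* S` of an automorphism of `P`. -/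
def autHom (P : Subgroup S) (f : MulAut P) : P →* S :=
  P.subtype.comp f.toMonoidHom

theorem autHom_apply (P : Subgroup S) (f : MulAut P) (u : P) :
    autHom P f u = (f u : S) := rfl

theorem autHom_injective (P : Subgroup S) : Function.Injective (autHom P) := by
  intro f g h
  ext u
  exact DFunLike.congr_fun h u

theorem autHom_range (P : Subgroup S) (f : MulAut P) : (autHom P f).range = P := by
  ext x
  constructor
  · rintro ⟨u, rfl⟩; exact (f u).2
  · intro hx; exact ⟨f.symm ⟨x, hx⟩, congrArg Subtype.val (f.apply_symm_apply ⟨x, hx⟩)⟩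

variable [Finite S]

/-- The group `Aut_F(P)` as a subgroup of `MulAut P`. -/
def autF (F : FusionSystem S) (P : Subgroup S) : Subgroup (MulAut P) where
  carrier := {f | autHom P f ∈ F.Hom P P}
  one_mem' := by
    refine F.mem_of_eq (F.incl_mem le_rfl) ?_
    ext u; simp [conjHom_apply, autHom_apply]
  mul_mem' := by
    intro f g hf hg
    refine F.mem_of_eq (F.comp_mem' (φ := autHom P g) (ψ := autHom P f) hg hf) ?_
    ext u
    simp only [MonoidHom.comp_apply, autHom_apply]
    exact congrArg (fun w => (f w : S)) (Subtype.ext rfl)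
  inv_mem' := by
    intro f hf
    obtain ⟨ι, hι, hιr, hinv⟩ := F.inv_hom_of_mem hf (autHom_range P f)
    refine F.mem_of_eq hι ?_
    ext u
    have h1 : u = ⟨autHom P f (f⁻¹ u), (f (f⁻¹ u)).2⟩ := by
      apply Subtype.ext
      show (u : S) = (f (f⁻¹ u) : S)
      exact congrArg Subtype.val (f.apply_symm_apply u).symm
    exact (congrArg ι h1).trans (hinv (f⁻¹ u) ((f (f⁻¹ u)).2))

theorem mem_autF_iff (F : FusionSystem S) (P : Subgroup S) (f : MulAut P) :
    f ∈ autF F P ↔ autHom P f ∈ F.Hom P P := Iff.rfl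

theorem exists_autF_of_hom (F : FusionSystem S) {P : Subgroup S} {φ : P →* S}
    (hφ : φ ∈ F.Hom P P) : ∃ f : MulAut P, f ∈ autF F P ∧ autHom P f = φ := by
  have hb : Function.Bijective (φ.codRestrict P (F.mapsTo' hφ)) := by
    rw [← Finite.injective_iff_bijective]
    intro a b hab
    exact F.injective' hφ (congrArg Subtype.val hab)
  refine ⟨MulEquiv.ofBijective _ hb, ?_, ?_⟩
  · have he : autHom P (MulEquiv.ofBijective _ hb) = φ := by ext u; rfl
    rw [mem_autF_iff, he]; exact hφ
  · ext u; rfl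

/-- Conjugation as a homomorphism from the normalizer to `MulAut P`. -/
def conjAut (P : Subgroup S) : (Subgroup.normalizer (P : Set S)) →* MulAut P where
  toFun x :=
    { toFun := fun u => ⟨(x : S) * u * (x : S)⁻¹, conjMemNormalizer x.2 u u.2⟩
      invFun := fun u => ⟨(x : S)⁻¹ * u * (x : S), by
        have hxi : ((x : S))⁻¹ ∈ (Subgroup.normalizer (P : Set S)) := (Subgroup.normalizer (P : Set S)).inv_mem x.2
        have := conjMemNormalizer hxi u u.2
        simpa using this⟩
      left_inv := fun u => by apply Subtype.ext; simp [mul_assoc]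
      right_inv := fun u => by apply Subtype.ext; simp [mul_assoc]
      map_mul' := fun u v => by apply Subtype.ext; simp [mul_assoc] }
  map_one' := by ext u; simp
  map_mul' := fun x y => by ext u; simp [mul_assoc]

theorem conjAut_apply (P : Subgroup S) (x : (Subgroup.normalizer (P : Set S))) (u : P) :
    ((conjAut P x u : P) : S) = (x : S) * u * (x : S)⁻¹ := rfl

theorem autHom_conjAut (P : Subgroup S) (x : (Subgroup.normalizer (P : Set S))) :
    autHom P (conjAut P x) = conjHom (x : S) P := by
  ext u; rfl

theorem conjAut_range_le_autF (F : FusionSystem S) (P : Subgroup S) :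
    (conjAut P).range ≤ autF F P := by
  rintro f ⟨x, rfl⟩
  rw [mem_autF_iff, autHom_conjAut]
  exact F.conj_mem' P P (x : S) (conjMemNormalizer x.2)

theorem ker_conjAut (P : Subgroup S) :
    (conjAut P).ker = (Subgroup.centralizer (P : Set S)).subgroupOf (Subgroup.normalizer (P : Set S)) := by
  ext x
  rw [MonoidHom.mem_ker, Subgroup.mem_subgroupOf, Subgroup.mem_centralizer_iff]
  constructor
  · intro h g hg
    have := congrArg (fun f : MulAut P => ((f ⟨g, hg⟩ : P) : S)) h
    rw [conjAut_apply] at this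
    have : (x : S) * g * (x : S)⁻¹ = g := this
    calc g * x = (x : S) * g * (x:S)⁻¹ * x := by rw [this]
    _ = (x : S) * g := by group
    _ = ↑x * g := rfl
  · intro h
    ext u
    have h2 := h u u.2
    show (x : S) * u * (x : S)⁻¹ = ((1 : MulAut P) u : S)
    calc (x : S) * u * (x : S)⁻¹ = u * x * (x : S)⁻¹ := by rw [h2]
    _ = u := by group
    _ = ((1 : MulAut P) u : S) := rfl

theorem card_normalizer_eq (P : Subgroup S) :
    Nat.card (Subgroup.normalizer (P : Set S))
      = Nat.card (conjAut P).range * Nat.card (Subgroup.centralizer (P : Set S)) := by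
  rw [Subgroup.card_eq_card_quotient_mul_card_subgroup (conjAut P).ker]
  congr 1
  · exact Nat.card_congr (QuotientGroup.quotientKerEquivRange (conjAut P)).toEquiv
  · rw [ker_conjAut]
    exact Nat.card_congr
      (Subgroup.subgroupOfEquivOfLe (centralizer_le_normalizer' P)).toEquiv

theorem image_autHom_autF (F : FusionSystem S) (P : Subgroup S) :
    autHom P '' (autF F P : Set (MulAut P)) = F.Hom P P := by
  ext φ
  constructor
  · rintro ⟨f, hf, rfl⟩; exact hf
  · intro hφ
    obtain ⟨f, hf, he⟩ := exists_autF_of_hom F hφ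
    exact ⟨f, hf, he⟩

theorem image_autHom_conjAut (P : Subgroup S) :
    autHom P '' ((conjAut P).range : Set (MulAut P)) = autSSet P := by
  ext φ
  constructor
  · rintro ⟨f, ⟨x, rfl⟩, rfl⟩
    exact ⟨(x : S), x.2, (autHom_conjAut P x).symm⟩
  · rintro ⟨s, hs, rfl⟩
    exact ⟨conjAut P ⟨s, hs⟩, ⟨⟨s, hs⟩, rfl⟩, autHom_conjAut P ⟨s, hs⟩⟩

theorem card_hom_eq_card_autF (F : FusionSystem S) (P : Subgroup S) :
    Nat.card (F.Hom P P) = Nat.card (autF F P) := by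
  rw [← image_autHom_autF F P, Nat.card_image_of_injective (autHom_injective P)]; rfl

theorem card_autSSet_eq_card_conjAut (P : Subgroup S) :
    Nat.card (autSSet P) = Nat.card (conjAut P).range := by
  rw [← image_autHom_conjAut P, Nat.card_image_of_injective (autHom_injective P)]; rfl

end AutGroups
section PureGroup
open scoped Pointwise

variable {G : Type*} [Group G] [Finite G]

theorem card_subgroupOf_eq {A H : Subgroup G} (h : A ≤ H) :
    Nat.card (A.subgroupOf H) = Nat.card A :=
  Nat.card_congr (Subgroup.subgroupOfEquivOfLe h).toEquiv

/-- If `A ≤ H` is a `p`-subgroup of index prime to `p`, then any `p`-element of `H`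
can be conjugated into `A` by an element of `H`. -/
theorem conj_into_of_sylow {p : ℕ} (hp : p.Prime) {A H : Subgroup G} (hAH : A ≤ H)
    (hA : IsPGroup p A) {k : ℕ} (hk : ¬ p ∣ k) (hcard : Nat.card H = k * Nat.card A)
    {x : G} (hx : x ∈ H) (hxp : ∃ m : ℕ, x ^ p ^ m = 1) :
    ∃ g ∈ H, g * x * g⁻¹ ∈ A := by
  haveI : Fact p.Prime := ⟨hp⟩
  set A₀ : Subgroup H := A.subgroupOf H with hA₀
  have hcardA₀ : Nat.card A₀ = Nat.card A := card_subgroupOf_eq hAH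
  obtain ⟨n, hn⟩ := hA.exists_card_eq
  have hk0 : k ≠ 0 := by
    intro h0
    rw [h0, zero_mul] at hcard
    have := Nat.card_pos (α := H)
    omega
  -- A₀ is a Sylow p-subgroup of H
  have hfact : (Nat.card H).factorization p = n := by
    rw [hcard, hn, Nat.factorization_mul hk0 (pow_ne_zero n hp.pos.ne'),
      hp.factorization_pow]
    simp [Nat.factorization_eq_zero_of_not_dvd hk]
  have hcard₀ : Nat.card A₀ = p ^ (Nat.card H).factorization p := by
    rw [hcardA₀, hn, hfact]
  let PS : Sylow p H := Sylow.ofCard A₀ hcard₀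
  have hPS : (PS : Subgroup H) = A₀ := Sylow.coe_ofCard A₀ hcard₀
  -- the element x₀
  set x₀ : H := ⟨x, hx⟩ with hx₀
  obtain ⟨m, hm⟩ := hxp
  have hx₀p : x₀ ^ p ^ m = 1 := by
    apply Subtype.ext
    rw [SubmonoidClass.coe_pow]
    exact hm
  have hzp : IsPGroup p (Subgroup.zpowers x₀) := by
    have hord : orderOf x₀ ∣ p ^ m := orderOf_dvd_of_pow_eq_one hx₀p
    obtain ⟨j, _, hj⟩ := (Nat.dvd_prime_pow hp).mp hord
    exact IsPGroup.of_card (by rw [Nat.card_zpowers, hj])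
  obtain ⟨Q, hQ⟩ := hzp.exists_le_sylow
  obtain ⟨g, hg⟩ := MulAction.exists_smul_eq H Q PS
  have hxQ : x₀ ∈ Q := hQ (Subgroup.mem_zpowers x₀)
  have hsub : MulAut.conj g • (Q : Subgroup H) = A₀ := by
    rw [← Sylow.pointwise_smul_def, ← Sylow.smul_def, hg, hPS]
  have hmem2 : g * x₀ * g⁻¹ ∈ A₀ := by
    rw [← hsub]
    have := Subgroup.smul_mem_pointwise_smul x₀ (MulAut.conj g) (Q : Subgroup H) hxQ
    simpa using this
  refine ⟨(g : G), g.2, ?_⟩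
  rw [hA₀, Subgroup.mem_subgroupOf] at hmem2
  exact hmem2

/-- If no `p`-element of the normalizer of a `p`-subgroup `A ≤ H` outside of `A`
exists, then `A` is a Sylow `p`-subgroup of `H`. -/
theorem sylow_data_of_no_normalizing_element {p : ℕ} (hp : p.Prime)
    {A H : Subgroup G} (hAH : A ≤ H) (hA : IsPGroup p A)
    (hno : ∀ x ∈ H, (∃ m : ℕ, x ^ p ^ m = 1) → x ∉ A →
      ¬ (∀ a ∈ A, x * a * x⁻¹ ∈ A)) :
    ∃ k : ℕ, ¬ p ∣ k ∧ Nat.card H = k * Nat.card A := by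
  haveI : Fact p.Prime := ⟨hp⟩
  set A₀ : Subgroup H := A.subgroupOf H with hA₀
  have hA₀p : IsPGroup p A₀ := hA.of_equiv (Subgroup.subgroupOfEquivOfLe hAH).symm
  obtain ⟨T, hT⟩ := hA₀p.exists_le_sylow
  have heq : A₀ = (T : Subgroup H) := by
    by_contra hne
    have hlt : A₀ < (T : Subgroup H) := lt_of_le_of_ne hT hne
    -- use the normalizer condition in the p-group T
    haveI : Fact p.Prime := ⟨hp⟩
    have hnil : Group.IsNilpotent T := T.2.isNilpotent
    have hNC : NormalizerCondition (T : Subgroup H) := normalizerCondition_of_isNilpotent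
    set B : Subgroup (T : Subgroup H) := A₀.subgroupOf T with hB
    have hBlt : B < ⊤ := by
      rw [lt_top_iff_ne_top]
      intro htop
      have : A₀ = (T : Subgroup H) := by
        apply le_antisymm hT
        intro t ht
        have : (⟨t, ht⟩ : (T : Subgroup H)) ∈ B := htop ▸ Subgroup.mem_top _
        rwa [hB, Subgroup.mem_subgroupOf] at this
      exact hne this
    have hBN := hNC B hBlt
    obtain ⟨α, hαN, hαB⟩ := SetLike.exists_of_lt hBN
    -- α is a p-element of H normalizing A, not in A
    set xH : H := ((α : (T : Subgroup H)) : H) with hxH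
    refine hno (xH : G) (xH.2) ?_ ?_ ?_
    · -- p-element
      obtain ⟨m, hm⟩ := T.2 α
      exact ⟨m, by
        have := congrArg (fun z : (T : Subgroup H) => ((z : H) : G)) hm
        simpa using this⟩
    · -- not in A
      intro hxA
      apply hαB
      rw [hB, Subgroup.mem_subgroupOf, hA₀, Subgroup.mem_subgroupOf]
      exact hxA
    · -- normalizes A
      intro a ha
      have haH : a ∈ H := hAH ha
      have haT' : (⟨a, haH⟩ : H) ∈ (T : Subgroup H) := hT (by
        rw [hA₀, Subgroup.mem_subgroupOf]; exact ha)
      set aT : (T : Subgroup H) := ⟨⟨a, haH⟩, haT'⟩ with haTdef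
      have haB : aT ∈ B := by
        rw [hB, Subgroup.mem_subgroupOf, hA₀, Subgroup.mem_subgroupOf]
        exact ha
      have hconj : α * aT * α⁻¹ ∈ B := by
        have := (Subgroup.mem_normalizer_iff.mp hαN aT).mp haB
        exact this
      rw [hB, Subgroup.mem_subgroupOf, hA₀, Subgroup.mem_subgroupOf] at hconj
      exact hconj
  refine ⟨(T : Subgroup H).index, ?_, ?_⟩
  · exact T.not_dvd_index
  · rw [← Subgroup.index_mul_card (T : Subgroup H), ← heq, hA₀, card_subgroupOf_eq hAH]

end PureGroup
section MainInduction

variable {S : Type*} [Group S] [Finite S]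

theorem isPGroup_conjAut_range {p : ℕ} (hS : IsPGroup p S) (P : Subgroup S) :
    IsPGroup p (conjAut P).range := by
  rw [MonoidHom.range_eq_map]
  exact IsPGroup.map ((hS.to_subgroup (Subgroup.normalizer (P : Set S))).to_subgroup ⊤) (conjAut P)

theorem top_data (p : ℕ) (F : FusionSystem S) (hIS : F.AxiomIS p) :
    ∃ k : ℕ, ¬ p ∣ k ∧
      Nat.card (autF F (⊤ : Subgroup S)) = k * Nat.card (conjAut (⊤ : Subgroup S)).range := by
  obtain ⟨-, -, k, hk, hcard⟩ := hIS
  refine ⟨k, hk, ?_⟩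
  rw [← card_hom_eq_card_autF, ← card_autSSet_eq_card_conjAut]
  exact hcard

theorem main_induction (p : ℕ) (hp : p.Prime) (hS : IsPGroup p S)
    (F : FusionSystem S) (hIS : F.AxiomIS p) (hII : F.AxiomII) :
    ∀ n : ℕ, ∀ P : Subgroup S, Nat.card S ≤ Nat.card P + n →
      F.Hom.FullyCentralized P →
      (∀ Q : Subgroup S, F.Hom.IsConj P Q → F.Hom.FullyCentralized Q →
        Nat.card (Subgroup.normalizer (Q : Set S)) ≤ Nat.card (Subgroup.normalizer (P : Set S))) →
      ∃ k : ℕ, ¬ p ∣ k ∧ Nat.card (autF F P) = k * Nat.card (conjAut P).range := by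
  haveI : Fact p.Prime := ⟨hp⟩
  intro n
  induction n with
  | zero =>
    intro P hfuel hP hmax
    have hPtop : P = ⊤ := by
      apply subgroup_eq_of_le_of_card_le le_top
      have : Nat.card (⊤ : Subgroup S) = Nat.card S := by
        exact Nat.card_congr Subgroup.topEquiv.toEquiv
      omega
    subst hPtop
    exact top_data p F hIS
  | succ n ih =>
    intro P hfuel hP hmax
    by_cases hPtop : P = ⊤
    · subst hPtop
      exact top_data p F hIS
    -- Setup
    have hcardtop : Nat.card (⊤ : Subgroup S) = Nat.card S :=
      Nat.card_congr Subgroup.topEquiv.toEquiv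
    have hPN : P ≤ (Subgroup.normalizer (P : Set S)) := Subgroup.le_normalizer
    have hPltN : P < (Subgroup.normalizer (P : Set S)) := by
      have hNC : NormalizerCondition S := by
        haveI := hS.isNilpotent
        exact normalizerCondition_of_isNilpotent
      exact hNC P (lt_top_iff_ne_top.mpr hPtop)
    have hcardPN : Nat.card P < Nat.card (Subgroup.normalizer (P : Set S)) := by
      refine lt_of_le_of_ne (Subgroup.card_le_of_le hPltN.le) ?_
      intro he
      exact hPltN.ne (subgroup_eq_of_le_of_card_le hPltN.le (le_of_eq he.symm))
    haveI : Finite (MulAut P) :=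
      Finite.of_injective (fun f : MulAut P => (f : P → P)) DFunLike.coe_injective
    have hAH : (conjAut P).range ≤ autF F P := conjAut_range_le_autF F P
    have hApg : IsPGroup p (conjAut P).range := isPGroup_conjAut_range hS P
    refine sylow_data_of_no_normalizing_element hp hAH hApg ?_
    intro αM hαH hαp hαA hnorm
    exfalso
    -- the underlying morphism
    have hαF : autHom P αM ∈ F.Hom P P := hαH
    have hrangeα : (autHom P αM).range = P := autHom_range P αM
    have hαtop : autHom P αM ∈ F.Hom P ⊤ := by
      refine F.mem_of_eq (F.comp_mem' hαF (F.incl_mem le_top)) ?_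
      ext u
      simp [conjHom_apply, MonoidHom.codRestrict_apply, autHom_apply]
    have hfc : F.Hom.FullyCentralized (autHom P αM).range := by
      rw [hrangeα]; exact hP
    obtain ⟨ψ0, hψ0, hψ0eq⟩ := hII P (autHom P αM) hαtop hfc
    -- N_φ = N_S(P)
    have hNphi : Nphi P (autHom P αM) = (Subgroup.normalizer (P : Set S)) := by
      apply le_antisymm
      · intro x hx; exact hx.1
      · intro x hx
        obtain ⟨y, hy⟩ := hnorm (conjAut P ⟨x, hx⟩) ⟨⟨x, hx⟩, rfl⟩
        refine ⟨hx, (y : S), by rw [hrangeα]; exact y.2, ?_⟩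
        intro u v hu hv hveq
        have h1 : (⟨v, hv⟩ : P) = conjAut P ⟨x, hx⟩ ⟨u, hu⟩ := Subtype.ext hveq
        calc autHom P αM ⟨v, hv⟩ = (αM (conjAut P ⟨x, hx⟩ ⟨u, hu⟩) : S) := by
              rw [autHom_apply, h1]
        _ = ((αM * conjAut P ⟨x, hx⟩ * αM⁻¹) (αM ⟨u, hu⟩) : S) := by
              congr 1
              simp [MulAut.mul_apply, MulAut.inv_def]
        _ = (conjAut P y (αM ⟨u, hu⟩) : S) := by rw [hy]
        _ = (y : S) * autHom P αM ⟨u, hu⟩ * (y : S)⁻¹ := rfl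
    -- extension ψ to the normalizer
    set ψ : (Subgroup.normalizer (P : Set S)) →* S := ψ0.comp (Subgroup.inclusion (le_of_eq hNphi.symm))
      with hψdef
    have hψF : ψ ∈ F.Hom (Subgroup.normalizer (P : Set S)) ⊤ := F.restr_mem _ hψ0
    have hψP : ∀ (u : S) (hu : u ∈ P) (hu' : u ∈ (Subgroup.normalizer (P : Set S))),
        ψ ⟨u, hu'⟩ = autHom P αM ⟨u, hu⟩ := by
      intro u hu hu'
      exact hψ0eq u hu (le_of_eq hNphi.symm hu')
    have hψmapsP : ∀ (u : S) (hu : u ∈ P) (hu' : u ∈ (Subgroup.normalizer (P : Set S))), ψ ⟨u, hu'⟩ ∈ P := by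
      intro u hu hu'
      rw [hψP u hu hu']
      exact F.mapsTo' hαF ⟨u, hu⟩
    have hrψle : ψ.range ≤ (Subgroup.normalizer (P : Set S)) := by
      rintro _ ⟨x, rfl⟩
      apply Subgroup.mem_normalizer_fintype
      intro v hv
      obtain ⟨u, hu⟩ : ∃ u : P, autHom P αM u = v := by rw [← hrangeα] at hv; exact hv
      have hv2 : ψ ⟨(u : S), hPN u.2⟩ = v := by
        rw [hψP _ u.2 _]; exact hu
      set w : (Subgroup.normalizer (P : Set S)) := x * ⟨(u : S), hPN u.2⟩ * x⁻¹ with hwdef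
      have hwP : (w : S) ∈ P := conjMemNormalizer x.2 u u.2
      have h3 : ψ x * v * (ψ x)⁻¹ = ψ w := by
        rw [← hv2, hwdef, map_mul, map_mul, map_inv]
      rw [h3]
      exact hψmapsP w hwP w.2
    have hrψ : ψ.range = (Subgroup.normalizer (P : Set S)) := subgroup_eq_of_le_of_card_le hrψle
      (le_of_eq (card_range_of_injective (F.injective' hψF)).symm)
    have hψNN : ψ ∈ F.Hom (Subgroup.normalizer (P : Set S)) (Subgroup.normalizer (P : Set S)) := by
      have := F.target_mem' hψF
      rwa [hrψ] at this
    obtain ⟨ψM, hψMF, hψMhom⟩ := exists_autF_of_hom F hψNN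
    -- restriction relations
    have hrel : ∀ (u : S) (hu : u ∈ P) (hu' : u ∈ (Subgroup.normalizer (P : Set S))),
        ((ψM ⟨u, hu'⟩ : (Subgroup.normalizer (P : Set S))) : S) = ((αM ⟨u, hu⟩ : P) : S) := by
      intro u hu hu'
      have h4 : autHom (Subgroup.normalizer (P : Set S)) ψM ⟨u, hu'⟩ = ψ ⟨u, hu'⟩ :=
        congrArg (fun θ : (Subgroup.normalizer (P : Set S)) →* S => θ ⟨u, hu'⟩) hψMhom
      exact h4.trans (hψP u hu hu')
    have hrelpow : ∀ (k : ℕ) (u : S) (hu : u ∈ P) (hu' : u ∈ (Subgroup.normalizer (P : Set S))),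
        (((ψM ^ k) ⟨u, hu'⟩ : (Subgroup.normalizer (P : Set S))) : S) = (((αM ^ k) ⟨u, hu⟩ : P) : S) := by
      intro k
      induction k with
      | zero => intro u hu hu'; rfl
      | succ k ihk =>
        intro u hu hu'
        have hmem : ((ψM ⟨u, hu'⟩ : (Subgroup.normalizer (P : Set S))) : S) ∈ P := by
          rw [hrel u hu hu']; exact (αM ⟨u, hu⟩).2
        have h2 := ihk ((ψM ⟨u, hu'⟩ : (Subgroup.normalizer (P : Set S))) : S) hmem (ψM ⟨u, hu'⟩).2
        calc (((ψM ^ (k+1)) ⟨u, hu'⟩ : (Subgroup.normalizer (P : Set S))) : S)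
            = (((ψM ^ k) (ψM ⟨u, hu'⟩) : (Subgroup.normalizer (P : Set S))) : S) := by rw [pow_succ]; rfl
        _ = (((αM ^ k) ⟨((ψM ⟨u, hu'⟩ : (Subgroup.normalizer (P : Set S))) : S), hmem⟩ : P) : S) := h2
        _ = (((αM ^ k) (αM ⟨u, hu⟩) : P) : S) := by
              congr 2
              exact Subtype.ext (hrel u hu hu')
        _ = (((αM ^ (k+1)) ⟨u, hu⟩ : P) : S) := by rw [pow_succ]; rfl
    -- p-part of ψM
    have hm0 : 0 < orderOf ψM := orderOf_pos ψM
    obtain ⟨e, he1, he2⟩ := Nat.chineseRemainder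
      ((Nat.coprime_ordCompl hp hm0.ne').pow_left ((orderOf ψM).factorization p)) 1 0
    set ψ' := ψM ^ e with hψ'def
    have hψ'p : ∃ j : ℕ, ψ' ^ p ^ j = 1 := by
      refine ⟨(orderOf ψM).factorization p, ?_⟩
      rw [hψ'def, ← pow_mul]
      apply orderOf_dvd_iff_pow_eq_one.mp
      have hbe : ordCompl[p] (orderOf ψM) ∣ e := Nat.modEq_zero_iff_dvd.mp he2
      obtain ⟨c, hc⟩ := hbe
      rw [hc]
      calc orderOf ψM = ordProj[p] (orderOf ψM) * ordCompl[p] (orderOf ψM) :=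
            (Nat.ordProj_mul_ordCompl_eq_self _ p).symm
      _ ∣ (ordProj[p] (orderOf ψM) * ordCompl[p] (orderOf ψM)) * c := Dvd.intro c rfl
      _ = ordProj[p] (orderOf ψM) * ordCompl[p] (orderOf ψM) * c := rfl
      _ = ordCompl[p] (orderOf ψM) * c * p ^ (orderOf ψM).factorization p := by ring
    have hαMm : αM ^ orderOf ψM = 1 := by
      ext u
      have h6 : ψM ^ orderOf ψM = 1 := pow_orderOf_eq_one ψM
      have h7 := hrelpow (orderOf ψM) u u.2 (hPN u.2)
      rw [h6] at h7
      exact h7.symm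
    have hordα : orderOf αM ∣ ordProj[p] (orderOf ψM) := by
      obtain ⟨mm, hmm⟩ := hαp
      obtain ⟨j, hjle, hjeq⟩ := (Nat.dvd_prime_pow hp).mp (orderOf_dvd_of_pow_eq_one hmm)
      rw [hjeq]
      have h8 : (p : ℕ) ^ j ∣ orderOf ψM := hjeq ▸ orderOf_dvd_of_pow_eq_one hαMm
      have h9 : Nat.Coprime (p ^ j) (ordCompl[p] (orderOf ψM)) :=
        (Nat.coprime_ordCompl hp hm0.ne').pow_left j
      have h10 : orderOf ψM = ordProj[p] (orderOf ψM) * ordCompl[p] (orderOf ψM) :=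
        (Nat.ordProj_mul_ordCompl_eq_self _ p).symm
      exact h9.dvd_of_dvd_mul_right (h10 ▸ h8)
    have hαe : αM ^ e = αM := by
      have h11 : e ≡ 1 [MOD orderOf αM] := Nat.ModEq.of_dvd hordα he1
      rw [← pow_one αM]
      calc (αM ^ 1) ^ e = αM ^ e := by rw [pow_one]
      _ = αM ^ 1 := pow_eq_pow_iff_modEq.mpr h11
    have hrel' : ∀ (u : S) (hu : u ∈ P) (hu' : u ∈ (Subgroup.normalizer (P : Set S))),
        ((ψ' ⟨u, hu'⟩ : (Subgroup.normalizer (P : Set S))) : S) = ((αM ⟨u, hu⟩ : P) : S) := by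
      intro u hu hu'
      rw [hψ'def, hrelpow e u hu hu', hαe]
    have hψ'F : ψ' ∈ autF F (Subgroup.normalizer (P : Set S)) := Subgroup.pow_mem _ hψMF e
    -- choose a fully centralized conjugate of the normalizer with maximal normalizer
    have hselfN : F.Hom.IsConj (Subgroup.normalizer (P : Set S)) (Subgroup.normalizer (P : Set S)) := F.isConj_refl _
    haveI hne1 : Nonempty {Q : Subgroup S // F.Hom.IsConj (Subgroup.normalizer (P : Set S)) Q} :=
      ⟨⟨(Subgroup.normalizer (P : Set S)), hselfN⟩⟩
    obtain ⟨⟨Q0, hQ0c⟩, hQ0max⟩ := Finite.exists_max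
      (fun Q : {Q : Subgroup S // F.Hom.IsConj (Subgroup.normalizer (P : Set S)) Q} =>
        Nat.card (Subgroup.centralizer ((Q : Subgroup S) : Set S)))
    have hQ0fc : F.Hom.FullyCentralized Q0 := by
      intro R hR
      exact hQ0max ⟨R, F.isConj_trans hQ0c hR⟩
    haveI hne2 : Nonempty
        {Q : Subgroup S // F.Hom.IsConj (Subgroup.normalizer (P : Set S)) Q ∧ F.Hom.FullyCentralized Q} :=
      ⟨⟨Q0, hQ0c, hQ0fc⟩⟩
    obtain ⟨⟨N', hN'c, hN'fc⟩, hN'max⟩ := Finite.exists_max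
      (fun Q : {Q : Subgroup S //
          F.Hom.IsConj (Subgroup.normalizer (P : Set S)) Q ∧ F.Hom.FullyCentralized Q} =>
        Nat.card (Subgroup.normalizer ((Q : Subgroup S) : Set S)))
    have hN'hmax : ∀ R : Subgroup S, F.Hom.IsConj N' R → F.Hom.FullyCentralized R →
        Nat.card (Subgroup.normalizer (R : Set S)) ≤ Nat.card (Subgroup.normalizer (N' : Set S)) := by
      intro R hR hRfc
      exact hN'max ⟨R, F.isConj_trans hN'c hR, hRfc⟩
    have hcardNN' : Nat.card (Subgroup.normalizer (P : Set S)) = Nat.card N' := F.card_eq_of_isConj hN'c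
    have hcardN'S : Nat.card N' ≤ Nat.card S := by
      have := Subgroup.card_le_of_le (le_top (a := N'))
      omega
    obtain ⟨k', hk', hcardN'⟩ := ih N' (by omega) hN'fc hN'hmax
    -- transfer ψ' to N'
    obtain ⟨χh, hχh, hχhr⟩ := hN'c
    obtain ⟨ι, hι, hιr, hinvι⟩ := F.inv_hom_of_mem hχh hχhr
    obtain ⟨χe, hχe⟩ := F.exists_mulEquiv hχh hχhr
    have hΦmap : ∀ f ∈ autF F (Subgroup.normalizer (P : Set S)), MulAut.congr χe f ∈ autF F N' := by
      intro f hf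
      refine F.mem_of_eq (F.comp_mem' (F.comp_mem' hι hf) hχh) ?_
      ext v
      have hval : ι v = ((χe.symm v : (Subgroup.normalizer (P : Set S))) : S) := by
        have h1 : v = (⟨χh (χe.symm v), F.mapsTo' hχh _⟩ : N') := by
          apply Subtype.ext
          show (v : S) = χh (χe.symm v)
          rw [← hχe (χe.symm v), χe.apply_symm_apply]
        conv_lhs => rw [h1]
        exact hinvι (χe.symm v) (F.mapsTo' hχh _)
      show χh _ = (N'.subtype.comp (MulAut.congr χe f).toMonoidHom) v
      have hrhs : (N'.subtype.comp (MulAut.congr χe f).toMonoidHom) v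
          = ((χe (f (χe.symm v)) : N') : S) := rfl
      rw [hrhs, hχe]
      exact congrArg χh (Subtype.ext
        (congrArg (fun x : (Subgroup.normalizer (P : Set S)) => (f x : S)) (Subtype.ext hval)))
    have hψ''F : MulAut.congr χe ψ' ∈ autF F N' := hΦmap ψ' hψ'F
    have hψ''p : ∃ j : ℕ, (MulAut.congr χe ψ') ^ p ^ j = 1 := by
      obtain ⟨j, hj⟩ := hψ'p
      exact ⟨j, by rw [← map_pow, hj, map_one]⟩
    haveI : Finite (MulAut N') :=
      Finite.of_injective (fun f : MulAut N' => (f : N' → N')) DFunLike.coe_injective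
    have hA'le : (conjAut N').range ≤ autF F N' := conjAut_range_le_autF F N'
    have hA'pg : IsPGroup p (conjAut N').range := isPGroup_conjAut_range hS N'
    obtain ⟨g, hgF, hgconj⟩ := conj_into_of_sylow hp hA'le hA'pg hk' hcardN' hψ''F hψ''p
    -- the final isomorphism χ = g ∘ χe
    set χ : (Subgroup.normalizer (P : Set S)) ≃* N' := χe.trans (g : MulAut N') with hχdef
    set χS : (Subgroup.normalizer (P : Set S)) →* S := N'.subtype.comp χ.toMonoidHom with hχSdef
    have hχS_apply : ∀ w : (Subgroup.normalizer (P : Set S)), χS w = ((χ w : N') : S) := fun _ => rfl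
    have hχSF : χS ∈ F.Hom (Subgroup.normalizer (P : Set S)) N' := by
      refine F.mem_of_eq (F.comp_mem' hχh hgF) ?_
      ext w
      show autHom N' g _ = χS w
      rw [hχS_apply]
      exact congrArg (fun z : N' => (g z : S)) (Subtype.ext (hχe w).symm)
    have hχψ' : MulAut.congr χ ψ' = g * (MulAut.congr χe ψ') * g⁻¹ := by
      ext w
      simp [hχdef, MulAut.mul_apply, MulAut.inv_def]
    have hχA : MulAut.congr χ ψ' ∈ (conjAut N').range := by
      rw [hχψ']; exact hgconj
    -- the image P' of P
    set ξ : P →* S := χS.comp (Subgroup.inclusion hPN) with hξdef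
    have hξ_apply : ∀ u : P, ξ u = ((χ (Subgroup.inclusion hPN u) : N') : S) :=
      fun _ => rfl
    have hξF : ξ ∈ F.Hom P N' := F.restr_mem hPN hχSF
    have hξP' : ξ ∈ F.Hom P ξ.range := F.target_mem' hξF
    have hconjPP' : F.Hom.IsConj P ξ.range := ⟨ξ, hξP', rfl⟩
    set χP : P ≃* ξ.range := MonoidHom.ofInjective (F.injective' hξF) with hχPdef
    have hχP_apply : ∀ u : P, ((χP u : ξ.range) : S) = ξ u := fun u => rfl
    -- centralizer cards agree
    have hcentle : Nat.card (Subgroup.centralizer (P : Set S))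
        ≤ Nat.card (Subgroup.centralizer ((ξ.range : Subgroup S) : Set S)) := by
      have hmap : ∀ x : Subgroup.centralizer (P : Set S),
          χS ⟨(x : S), centralizer_le_normalizer' P x.2⟩
            ∈ Subgroup.centralizer ((ξ.range : Subgroup S) : Set S) := by
        intro x
        rw [Subgroup.mem_centralizer_iff]
        rintro _ ⟨u, rfl⟩
        set xbar : (Subgroup.normalizer (P : Set S)) := ⟨(x : S), centralizer_le_normalizer' P x.2⟩
        have hcomm : Subgroup.inclusion hPN u * xbar = xbar * Subgroup.inclusion hPN u := by
          apply Subtype.ext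
          exact Subgroup.mem_centralizer_iff.mp x.2 (u : S) u.2
        calc ξ u * χS xbar = χS (Subgroup.inclusion hPN u * xbar) := by
              rw [map_mul]; rfl
        _ = χS (xbar * Subgroup.inclusion hPN u) := by rw [hcomm]
        _ = χS xbar * ξ u := by rw [map_mul]; rfl
      have hinj : Function.Injective (fun x : Subgroup.centralizer (P : Set S) =>
          (⟨χS ⟨(x : S), centralizer_le_normalizer' P x.2⟩, hmap x⟩ :
            Subgroup.centralizer ((ξ.range : Subgroup S) : Set S))) := by
        intro x y hxy
        apply Subtype.ext
        have h1 := congrArg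
          (fun z : (Subgroup.centralizer ((ξ.range : Subgroup S) : Set S)) => (z : S)) hxy
        have h2 := F.injective' hχSF h1
        exact congrArg (fun z : (Subgroup.normalizer (P : Set S)) => (z : S)) h2
      exact Nat.card_le_card_of_injective _ hinj
    have hcent : Nat.card (Subgroup.centralizer ((ξ.range : Subgroup S) : Set S))
        = Nat.card (Subgroup.centralizer (P : Set S)) :=
      le_antisymm (hP ξ.range hconjPP') hcentle
    have hfcP' : F.Hom.FullyCentralized ξ.range := by
      intro R hR
      exact le_trans (hP R (F.isConj_trans hconjPP' hR)) (le_of_eq hcent.symm)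
    have hnormle : Nat.card (Subgroup.normalizer ((ξ.range) : Set S)) ≤ Nat.card (Subgroup.normalizer (P : Set S)) :=
      hmax ξ.range hconjPP' hfcP'
    have hcardA'leA : Nat.card (conjAut ξ.range).range ≤ Nat.card (conjAut P).range := by
      have e1 := card_normalizer_eq P
      have e2 := card_normalizer_eq ξ.range
      have hcpos : 0 < Nat.card (Subgroup.centralizer (P : Set S)) := Nat.card_pos
      rw [e1, e2, hcent] at hnormle
      exact Nat.le_of_mul_le_mul_right hnormle hcpos
    -- transport A and αM into Aut_S(P')
    haveI : Finite (MulAut ξ.range) :=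
      Finite.of_injective (fun f : MulAut ξ.range => (f : ξ.range → ξ.range))
        DFunLike.coe_injective
    have hkey : ∀ (x : (Subgroup.normalizer (P : Set S))) (fP : MulAut P),
        (∀ v : P, fP v = ⟨(x : S) * v * (x : S)⁻¹, conjMemNormalizer x.2 v v.2⟩) →
        MulAut.congr χP fP ∈ (conjAut ξ.range).range := by
      intro x fP hfP
      have hx1 : ∀ u : P, χS x * ξ u * (χS x)⁻¹ = ξ (fP u) := by
        intro u
        have h2 : Subgroup.inclusion hPN (fP u) = x * Subgroup.inclusion hPN u * x⁻¹ := by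
          apply Subtype.ext
          rw [hfP u]
          rfl
        have h1 : ξ (fP u) = χS (Subgroup.inclusion hPN (fP u)) := rfl
        rw [h1, h2, map_mul, map_mul, map_inv]
        rfl
      have htnorm : χS x ∈ (Subgroup.normalizer ((ξ.range) : Set S)) := by
        apply Subgroup.mem_normalizer_fintype
        rintro _ ⟨u, rfl⟩
        rw [hx1 u]
        exact ⟨fP u, rfl⟩
      refine ⟨⟨χS x, htnorm⟩, ?_⟩
      ext v
      obtain ⟨u, rfl⟩ := χP.surjective v
      show χS x * ((χP u : ξ.range) : S) * (χS x)⁻¹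
        = ((χP (fP (χP.symm (χP u))) : ξ.range) : S)
      rw [χP.symm_apply_apply, hχP_apply, hχP_apply]
      exact hx1 u
    have hmapA : Subgroup.map (MulAut.congr χP).toMonoidHom (conjAut P).range
        ≤ (conjAut ξ.range).range := by
      rintro _ ⟨f0, ⟨x, rfl⟩, rfl⟩
      exact hkey x (conjAut P x) (fun v => rfl)
    have hαP' : MulAut.congr χP αM ∈ (conjAut ξ.range).range := by
      obtain ⟨t, ht⟩ := hχA
      have hkey2 : ∀ u : P, (t : S) * ξ u * (t : S)⁻¹ = ξ (αM u) := by
        intro u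
        have hmem : ξ u ∈ N' := F.mapsTo' hξF u
        have h1 := congrArg (fun f : MulAut N' => ((f ⟨ξ u, hmem⟩ : N') : S)) ht
        have h2 : χ.symm ⟨ξ u, hmem⟩ = Subgroup.inclusion hPN u := by
          apply χ.injective
          rw [χ.apply_symm_apply]
          apply Subtype.ext
          exact (hξ_apply u).symm
        have h3 : ψ' (Subgroup.inclusion hPN u) = Subgroup.inclusion hPN (αM u) := by
          apply Subtype.ext
          exact hrel' (u : S) u.2 (hPN u.2)
        calc (t : S) * ξ u * (t : S)⁻¹
            = ((conjAut N' t ⟨ξ u, hmem⟩ : N') : S) := rfl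
        _ = ((MulAut.congr χ ψ' ⟨ξ u, hmem⟩ : N') : S) := h1
        _ = ((χ (ψ' (χ.symm ⟨ξ u, hmem⟩)) : N') : S) := rfl
        _ = ((χ (Subgroup.inclusion hPN (αM u)) : N') : S) := by rw [h2, h3]
        _ = ξ (αM u) := (hξ_apply (αM u)).symm
      have htnorm : (t : S) ∈ (Subgroup.normalizer ((ξ.range) : Set S)) := by
        apply Subgroup.mem_normalizer_fintype
        rintro _ ⟨u, rfl⟩
        rw [hkey2 u]
        exact ⟨αM u, rfl⟩
      refine ⟨⟨(t : S), htnorm⟩, ?_⟩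
      ext v
      obtain ⟨u, rfl⟩ := χP.surjective v
      show (t : S) * ((χP u : ξ.range) : S) * (t : S)⁻¹
        = ((χP (αM (χP.symm (χP u))) : ξ.range) : S)
      rw [χP.symm_apply_apply, hχP_apply, hχP_apply]
      exact hkey2 u
    set B := (conjAut P).range ⊔ Subgroup.zpowers αM with hBdef
    have hABlt : Nat.card (conjAut P).range < Nat.card B := by
      have hle : (conjAut P).range ≤ B := le_sup_left
      have hmemB : αM ∈ B := Subgroup.mem_sup_right (Subgroup.mem_zpowers αM)
      refine lt_of_le_of_ne (Subgroup.card_le_of_le hle) (fun he => hαA ?_)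
      have h13 := subgroup_eq_of_le_of_card_le hle (le_of_eq he.symm)
      rw [h13]; exact hmemB
    have hcardB : Nat.card B
        = Nat.card (Subgroup.map (MulAut.congr χP).toMonoidHom B) :=
      Nat.card_congr (Subgroup.equivMapOfInjective B (MulAut.congr χP).toMonoidHom
        (fun a b h => (MulAut.congr χP).injective h)).toEquiv
    have hmapB : Subgroup.map (MulAut.congr χP).toMonoidHom B ≤ (conjAut ξ.range).range := by
      rw [hBdef, Subgroup.map_sup]
      apply sup_le hmapA
      rw [MonoidHom.map_zpowers]
      exact Subgroup.zpowers_le.mpr hαP'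
    have hfinal : Nat.card B ≤ Nat.card (conjAut ξ.range).range := by
      rw [hcardB]
      exact Subgroup.card_le_of_le hmapB
    omega


end MainInduction
/-- Let `F` be a fusion system on a finite `p`-group `S` satisfying
Axioms I_S and II.  If `P ≤ S` is fully `F`-centralized and `|N_S(P)| ≥ |N_S(Q)|` for
every fully `F`-centralized subgroup `Q` which is `F`-conjugate to `P`, then `Aut_S(P)`
is a Sylow `p`-subgroup of `Aut_F(P)`. -/
theorem autS_isSylow_of_fullyCentralized_max_normalizer
    (p : ℕ) (hp : p.Prime) (S : Type*) [Group S] [Finite S] (hS : IsPGroup p S)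
    (F : FusionSystem S) (hIS : F.AxiomIS p) (hII : F.AxiomII)
    (P : Subgroup S) (hP : F.Hom.FullyCentralized P)
    (hmax : ∀ Q : Subgroup S, F.Hom.IsConj P Q → F.Hom.FullyCentralized Q →
      Nat.card (Subgroup.normalizer (Q : Set S)) ≤ Nat.card (Subgroup.normalizer (P : Set S))) :
    F.Hom.AutSIsSylow p P := by
  haveI : Fact p.Prime := ⟨hp⟩
  obtain ⟨k, hk, hcard⟩ := main_induction p hp hS F hIS hII (Nat.card S) P
    (Nat.le_add_left _ _) hP hmax
  refine ⟨?_, ?_, k, hk, ?_⟩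
  · rintro φ ⟨s, hs, rfl⟩
    exact F.conj_mem' P P s (conjMemNormalizer hs)
  · have hpg : IsPGroup p (conjAut P).range := isPGroup_conjAut_range hS P
    obtain ⟨n, hn⟩ := hpg.exists_card_eq
    exact ⟨n, by rw [card_autSSet_eq_card_conjAut]; exact hn⟩
  · rw [card_hom_eq_card_autF, card_autSSet_eq_card_conjAut]
    exact hcard
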